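/- The convolution-stride slicer with unit-norm kernels is a linear functional of Euclidean norm at most 1 (key step in the proof of Proposition 2): suppose each kernel K^{(1)} ∈ ℝ^{c×2×2}, K^{(h)} ∈ ℝ^{1×2×2} (2 ≤ h ≤ N−1), K^{(N)} ∈ ℝ^{1×a×a} satisfies ‖K^{(h)}‖₂ = 1. Then there exists Θ ∈ ℝ^{c×d×d} with ‖Θ‖₂ ≤ 1 such that CS-s(X|K^{(1)},…,K^{(N)}) = Σ_{h=1}^{c} Σ_{i=1}^{d} Σ_{j=1}^{d} Θ_{h,i,j}·X_{h,i,j} for all X ∈ ℝ^{c×d×d}. In particular, X ↦ CS-s(X|K^{(1)},…,K^{(N)}) is linear and 1-Lipschitz. -/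

import Mathlib

open MeasureTheory ENNReal

noncomputable section

/-- Stride-2 convolution of a `c' × (2m) × (2m)` tensor with a `c' × 2 × 2` kernel (one output
channel): `Y i j = ∑ h, ∑ i', ∑ j', X h (2i+i') (2j+j') * K h i' j'`. -/
def convStride2 {c' : ℕ} (m : ℕ) (X : Fin c' → Fin (2 * m) → Fin (2 * m) → ℝ)
    (K : Fin c' → Fin 2 → Fin 2 → ℝ) (i j : Fin m) : ℝ :=
  ∑ h : Fin c', ∑ i' : Fin 2, ∑ j' : Fin 2,
    X h ⟨2 * i.1 + i'.1, by have h1 := i.isLt; have h2 := i'.isLt; omega⟩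
        ⟨2 * j.1 + j'.1, by have h1 := j.isLt; have h2 := j'.isLt; omega⟩ * K h i' j'

/-- Iterated stride-2 convolutions with single-channel `1 × 2 × 2` kernels, going from
spatial size `2^k * a` down to size `a`; `Ks 0` is applied first. -/
def midConv (a : ℕ) : (k : ℕ) → (Fin k → Fin 1 → Fin 2 → Fin 2 → ℝ) →
    (Fin (2 ^ k * a) → Fin (2 ^ k * a) → ℝ) → Fin a → Fin a → ℝ
  | 0, _, X, i, j => X (Fin.cast (by ring) i) (Fin.cast (by ring) j)
  | k + 1, Ks, X, i, j =>
      midConv a k (fun t => Ks t.succ)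
        (convStride2 (2 ^ k * a)
          (fun _ r s => X (Fin.cast (by ring) r) (Fin.cast (by ring) s))
          (Ks 0)) i j

/-- The space of `c × d × d` images, with the Euclidean (ℓ2) norm. -/
abbrev TensorSpace (c d : ℕ) := EuclideanSpace ℝ (Fin c × Fin d × Fin d)

/-- The convolution-stride slicer `CS-s(·|K^(1),…,K^(N))` with `N = M + 2` kernels, on images of
size `c × d × d` where `d = 2^(M+1) * a`: a stride-2 convolution with the `c × 2 × 2` kernel `K1`,
then `M` stride-2 convolutions with the `1 × 2 × 2` kernels `Ks`, then the inner product with the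
`1 × a × a` kernel `KN`. -/
def CSs (c a M : ℕ) (K1 : Fin c → Fin 2 → Fin 2 → ℝ)
    (Ks : Fin M → Fin 1 → Fin 2 → Fin 2 → ℝ) (KN : Fin 1 → Fin a → Fin a → ℝ)
    (X : TensorSpace c (2 ^ (M + 1) * a)) : ℝ :=
  ∑ i : Fin a, ∑ j : Fin a,
    midConv a M Ks
      (convStride2 (2 ^ M * a)
        (fun h r s => X (h, Fin.cast (by ring) r, Fin.cast (by ring) s)) K1) i j * KN 0 i j


namespace CSsAux

/-- The pairing `(i, i') ↦ 2 i + i'` as an equiv. -/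
def e2 (m : ℕ) : Fin m × Fin 2 ≃ Fin (2 * m) where
  toFun p := ⟨2 * p.1.1 + p.2.1, by have := p.1.isLt; have := p.2.isLt; omega⟩
  invFun r := (⟨r.1 / 2, by have := r.isLt; omega⟩, ⟨r.1 % 2, by omega⟩)
  left_inv p := by
    obtain ⟨⟨i, hi⟩, ⟨j, hj⟩⟩ := p
    simp only [Prod.mk.injEq, Fin.mk.injEq]
    omega
  right_inv r := by
    simp only [Fin.mk.injEq, Fin.ext_iff]
    omega

lemma sum_e2 (m : ℕ) (f : Fin (2 * m) → ℝ) :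
    ∑ i : Fin m, ∑ i' : Fin 2,
      f ⟨2 * i.1 + i'.1, by have := i.isLt; have := i'.isLt; omega⟩ = ∑ r, f r := by
  rw [← Equiv.sum_comp (e2 m) f, Fintype.sum_prod_type]
  rfl

/-- Cauchy–Schwarz bound for the stride-2 convolution. -/
lemma conv_sq_le {c' m : ℕ} (X : Fin c' → Fin (2 * m) → Fin (2 * m) → ℝ)
    (K : Fin c' → Fin 2 → Fin 2 → ℝ) :
    ∑ i : Fin m, ∑ j : Fin m, (convStride2 m X K i j) ^ 2 ≤
      (∑ h, ∑ i', ∑ j', K h i' j' ^ 2) * (∑ h, ∑ r, ∑ s, X h r s ^ 2) := by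
  have key : ∀ i j : Fin m, (convStride2 m X K i j) ^ 2 ≤
      (∑ h, ∑ i' : Fin 2, ∑ j' : Fin 2,
        X h ⟨2 * i.1 + i'.1, by have := i.isLt; have := i'.isLt; omega⟩
          ⟨2 * j.1 + j'.1, by have := j.isLt; have := j'.isLt; omega⟩ ^ 2) *
      (∑ h, ∑ i', ∑ j', K h i' j' ^ 2) := by
    intro i j
    have := Finset.sum_mul_sq_le_sq_mul_sq (Finset.univ : Finset (Fin c' × Fin 2 × Fin 2))
      (fun p => X p.1 ⟨2 * i.1 + p.2.1.1, by have := i.isLt; have := p.2.1.isLt; omega⟩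
        ⟨2 * j.1 + p.2.2.1, by have := j.isLt; have := p.2.2.isLt; omega⟩)
      (fun p => K p.1 p.2.1 p.2.2)
    simpa [convStride2, Fintype.sum_prod_type] using this
  calc ∑ i : Fin m, ∑ j : Fin m, (convStride2 m X K i j) ^ 2
      ≤ ∑ i : Fin m, ∑ j : Fin m,
        (∑ h, ∑ i' : Fin 2, ∑ j' : Fin 2,
          X h ⟨2 * i.1 + i'.1, by have := i.isLt; have := i'.isLt; omega⟩
            ⟨2 * j.1 + j'.1, by have := j.isLt; have := j'.isLt; omega⟩ ^ 2) *
        (∑ h, ∑ i', ∑ j', K h i' j' ^ 2) := by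
        exact Finset.sum_le_sum fun i _ => Finset.sum_le_sum fun j _ => key i j
    _ = (∑ h, ∑ i', ∑ j', K h i' j' ^ 2) * (∑ h, ∑ r, ∑ s, X h r s ^ 2) := by
        simp_rw [← Finset.sum_mul]
        rw [mul_comm]
        congr 1
        have step1 : ∀ h : Fin c', ∑ r, ∑ s, X h r s ^ 2 =
            ∑ i : Fin m, ∑ i' : Fin 2, ∑ j : Fin m, ∑ j' : Fin 2,
              X h ⟨2 * i.1 + i'.1, by have := i.isLt; have := i'.isLt; omega⟩
                ⟨2 * j.1 + j'.1, by have := j.isLt; have := j'.isLt; omega⟩ ^ 2 := by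
          intro h
          rw [← sum_e2 m (fun r => ∑ s, X h r s ^ 2)]
          refine Finset.sum_congr rfl fun i _ => Finset.sum_congr rfl fun i' _ => ?_
          rw [← sum_e2 m (fun s => X h _ s ^ 2)]
        calc ∑ i : Fin m, ∑ j : Fin m, ∑ h : Fin c', ∑ i' : Fin 2, ∑ j' : Fin 2,
              X h ⟨2 * i.1 + i'.1, by have := i.isLt; have := i'.isLt; omega⟩
                ⟨2 * j.1 + j'.1, by have := j.isLt; have := j'.isLt; omega⟩ ^ 2
            = ∑ h : Fin c', ∑ i : Fin m, ∑ i' : Fin 2, ∑ j : Fin m, ∑ j' : Fin 2,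
              X h ⟨2 * i.1 + i'.1, by have := i.isLt; have := i'.isLt; omega⟩
                ⟨2 * j.1 + j'.1, by have := j.isLt; have := j'.isLt; omega⟩ ^ 2 := by
              rw [show (∑ i : Fin m, ∑ j : Fin m, ∑ h : Fin c', ∑ i' : Fin 2, ∑ j' : Fin 2,
                  X h ⟨2 * i.1 + i'.1, by have := i.isLt; have := i'.isLt; omega⟩
                    ⟨2 * j.1 + j'.1, by have := j.isLt; have := j'.isLt; omega⟩ ^ 2) =
                ∑ i : Fin m, ∑ h : Fin c', ∑ j : Fin m, ∑ i' : Fin 2, ∑ j' : Fin 2,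
                  X h ⟨2 * i.1 + i'.1, by have := i.isLt; have := i'.isLt; omega⟩
                    ⟨2 * j.1 + j'.1, by have := j.isLt; have := j'.isLt; omega⟩ ^ 2 from
                Finset.sum_congr rfl fun i _ => Finset.sum_comm .., Finset.sum_comm ..]
              refine Finset.sum_congr rfl fun h _ => Finset.sum_congr rfl fun i _ => ?_
              exact Finset.sum_comm ..
          _ = ∑ h : Fin c', ∑ r, ∑ s, X h r s ^ 2 :=
              Finset.sum_congr rfl fun h _ => (step1 h).symm


lemma sum_fin_cast {n n' : ℕ} (h : n = n') (f : Fin n' → ℝ) :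
    ∑ i : Fin n, f (Fin.cast h i) = ∑ r : Fin n', f r :=
  Equiv.sum_comp (finCongr h) f

lemma sum_sq_cast {n n' : ℕ} (h : n = n') (X : Fin n' → Fin n' → ℝ) :
    ∑ r : Fin n, ∑ s : Fin n, X (Fin.cast h r) (Fin.cast h s) ^ 2 = ∑ r, ∑ s, X r s ^ 2 := by
  subst h; simp [Fin.cast]

lemma mid_sq_le (a : ℕ) : ∀ (k : ℕ) (Ks : Fin k → Fin 1 → Fin 2 → Fin 2 → ℝ)
    (X : Fin (2 ^ k * a) → Fin (2 ^ k * a) → ℝ),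
    (∀ t, ∑ h : Fin 1, ∑ i : Fin 2, ∑ j : Fin 2, Ks t h i j ^ 2 = 1) →
    ∑ i : Fin a, ∑ j : Fin a, (midConv a k Ks X i j) ^ 2 ≤ ∑ r, ∑ s, X r s ^ 2
  | 0, Ks, X, _ => by
      simp only [midConv]
      exact le_of_eq (sum_sq_cast (by ring) X)
  | k + 1, Ks, X, hKs => by
      simp only [midConv]
      refine le_trans (mid_sq_le a k (fun t => Ks t.succ) _ fun t => hKs t.succ) ?_
      refine le_trans (conv_sq_le _ (Ks 0)) ?_
      rw [hKs 0, one_mul, Fin.sum_univ_one]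
      exact le_of_eq (sum_sq_cast (by ring) X)


lemma sum_sq_cast3 {c n n' : ℕ} (h : n = n') (X : Fin c → Fin n' → Fin n' → ℝ) :
    ∑ t : Fin c, ∑ r : Fin n, ∑ s : Fin n, X t (Fin.cast h r) (Fin.cast h s) ^ 2 =
      ∑ t, ∑ r, ∑ s, X t r s ^ 2 := by
  subst h; simp [Fin.cast]

lemma convStride2_add {c' m : ℕ} (X Y : Fin c' → Fin (2 * m) → Fin (2 * m) → ℝ)
    (K : Fin c' → Fin 2 → Fin 2 → ℝ) (i j : Fin m) :
    convStride2 m (fun h r s => X h r s + Y h r s) K i j =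
      convStride2 m X K i j + convStride2 m Y K i j := by
  simp [convStride2, add_mul, Finset.sum_add_distrib]

lemma convStride2_smul {c' m : ℕ} (t : ℝ) (X : Fin c' → Fin (2 * m) → Fin (2 * m) → ℝ)
    (K : Fin c' → Fin 2 → Fin 2 → ℝ) (i j : Fin m) :
    convStride2 m (fun h r s => t * X h r s) K i j = t * convStride2 m X K i j := by
  simp only [convStride2, Finset.mul_sum, mul_assoc]

lemma midConv_add (a : ℕ) : ∀ (k : ℕ) (Ks : Fin k → Fin 1 → Fin 2 → Fin 2 → ℝ)
    (X Y : Fin (2 ^ k * a) → Fin (2 ^ k * a) → ℝ) (i j : Fin a),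
    midConv a k Ks (fun r s => X r s + Y r s) i j =
      midConv a k Ks X i j + midConv a k Ks Y i j
  | 0, Ks, X, Y, i, j => rfl
  | k + 1, Ks, X, Y, i, j => by
      simp only [midConv]
      rw [show (convStride2 (2 ^ k * a)
            (fun _ r s => X (Fin.cast (by ring) r) (Fin.cast (by ring) s) +
              Y (Fin.cast (by ring) r) (Fin.cast (by ring) s)) (Ks 0)) =
          fun i j => convStride2 (2 ^ k * a)
              (fun _ r s => X (Fin.cast (by ring) r) (Fin.cast (by ring) s)) (Ks 0) i j +
            convStride2 (2 ^ k * a)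
              (fun _ r s => Y (Fin.cast (by ring) r) (Fin.cast (by ring) s)) (Ks 0) i j from
        funext fun i => funext fun j => convStride2_add _ _ _ i j]
      exact midConv_add a k _ _ _ i j

lemma midConv_smul (a : ℕ) : ∀ (k : ℕ) (Ks : Fin k → Fin 1 → Fin 2 → Fin 2 → ℝ) (t : ℝ)
    (X : Fin (2 ^ k * a) → Fin (2 ^ k * a) → ℝ) (i j : Fin a),
    midConv a k Ks (fun r s => t * X r s) i j = t * midConv a k Ks X i j
  | 0, Ks, t, X, i, j => rfl
  | k + 1, Ks, t, X, i, j => by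
      simp only [midConv]
      rw [show (convStride2 (2 ^ k * a)
            (fun _ r s => t * X (Fin.cast (by ring) r) (Fin.cast (by ring) s)) (Ks 0)) =
          fun i j => t * convStride2 (2 ^ k * a)
              (fun _ r s => X (Fin.cast (by ring) r) (Fin.cast (by ring) s)) (Ks 0) i j from
        funext fun i => funext fun j => convStride2_smul t _ _ i j]
      exact midConv_smul a k _ t _ i j

end CSsAux

/-- The convolution-stride slicer with unit-norm kernels is a linear functional of Euclidean norm
at most 1: there is `Θ ∈ ℝ^{c×d×d}` with `‖Θ‖₂ ≤ 1` such that
`CS-s(X|K^(1),…,K^(N)) = ∑_{h,i,j} Θ_{h,i,j} X_{h,i,j}`; in particular the slicer is linear and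
1-Lipschitz. Here `d = 2^(M+1)·a`, i.e. `N = M + 2 ≥ 2`. -/
theorem CSs_linear_functional (c a M : ℕ) (hc : 1 ≤ c) (ha : 1 ≤ a)
    (K1 : Fin c → Fin 2 → Fin 2 → ℝ) (Ks : Fin M → Fin 1 → Fin 2 → Fin 2 → ℝ)
    (KN : Fin 1 → Fin a → Fin a → ℝ)
    (hK1 : Real.sqrt (∑ h : Fin c, ∑ i : Fin 2, ∑ j : Fin 2, K1 h i j ^ 2) = 1)
    (hKs : ∀ t : Fin M,
      Real.sqrt (∑ h : Fin 1, ∑ i : Fin 2, ∑ j : Fin 2, Ks t h i j ^ 2) = 1)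
    (hKN : Real.sqrt (∑ h : Fin 1, ∑ i : Fin a, ∑ j : Fin a, KN h i j ^ 2) = 1) :
    ∃ Θ : TensorSpace c (2 ^ (M + 1) * a), ‖Θ‖ ≤ 1 ∧
      (∀ X : TensorSpace c (2 ^ (M + 1) * a),
        CSs c a M K1 Ks KN X =
          ∑ h : Fin c, ∑ i : Fin (2 ^ (M + 1) * a), ∑ j : Fin (2 ^ (M + 1) * a),
            Θ (h, i, j) * X (h, i, j)) ∧
      IsLinearMap ℝ (CSs c a M K1 Ks KN) ∧ LipschitzWith 1 (CSs c a M K1 Ks KN) := by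
  classical
  set d := 2 ^ (M + 1) * a with hd
  have hK1' : ∑ h, ∑ i, ∑ j, K1 h i j ^ 2 = 1 := Real.sqrt_eq_one.mp hK1
  have hKs' : ∀ t, ∑ h : Fin 1, ∑ i, ∑ j, Ks t h i j ^ 2 = 1 := fun t =>
    Real.sqrt_eq_one.mp (hKs t)
  have hKN' : ∑ h : Fin 1, ∑ i, ∑ j, KN h i j ^ 2 = 1 := Real.sqrt_eq_one.mp hKN
  -- the quadratic (Cauchy–Schwarz) bound
  have key : ∀ X : TensorSpace c d, (CSs c a M K1 Ks KN X) ^ 2 ≤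
      ∑ p : Fin c × Fin d × Fin d, X p ^ 2 := by
    intro X
    set Y : Fin a → Fin a → ℝ := midConv a M Ks
      (convStride2 (2 ^ M * a)
        (fun h r s => X (h, Fin.cast (by ring) r, Fin.cast (by ring) s)) K1) with hY
    have e1 : CSs c a M K1 Ks KN X = ∑ p : Fin a × Fin a, Y p.1 p.2 * KN 0 p.1 p.2 := by
      rw [CSs, Fintype.sum_prod_type]
    have h1 := Finset.sum_mul_sq_le_sq_mul_sq (Finset.univ : Finset (Fin a × Fin a))
      (fun p => Y p.1 p.2) (fun p => KN 0 p.1 p.2)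
    have e2 : (∑ p : Fin a × Fin a, KN 0 p.1 p.2 ^ 2) = 1 := by
      rw [Fintype.sum_prod_type]
      simpa using hKN'
    have h2 : (CSs c a M K1 Ks KN X) ^ 2 ≤ ∑ p : Fin a × Fin a, Y p.1 p.2 ^ 2 := by
      rw [e1]; calc (∑ p : Fin a × Fin a, Y p.1 p.2 * KN 0 p.1 p.2) ^ 2
          ≤ (∑ p : Fin a × Fin a, Y p.1 p.2 ^ 2) * ∑ p : Fin a × Fin a, KN 0 p.1 p.2 ^ 2 := h1
        _ = ∑ p : Fin a × Fin a, Y p.1 p.2 ^ 2 := by rw [e2, mul_one]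
    have h3 : ∑ p : Fin a × Fin a, Y p.1 p.2 ^ 2 ≤
        ∑ r, ∑ s, (convStride2 (2 ^ M * a)
          (fun h r s => X (h, Fin.cast (by ring) r, Fin.cast (by ring) s)) K1) r s ^ 2 := by
      rw [Fintype.sum_prod_type]
      exact CSsAux.mid_sq_le a M Ks _ hKs'
    have h4 : ∑ r, ∑ s, (convStride2 (2 ^ M * a)
          (fun h r s => X (h, Fin.cast (by ring) r, Fin.cast (by ring) s)) K1) r s ^ 2 ≤
        ∑ p : Fin c × Fin d × Fin d, X p ^ 2 := by
      refine le_trans (CSsAux.conv_sq_le _ K1) ?_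
      rw [hK1', one_mul]
      rw [CSsAux.sum_sq_cast3 (by rw [hd]; ring) (fun t r s => X (t, r, s))]
      rw [Fintype.sum_prod_type]
      exact le_of_eq (Finset.sum_congr rfl fun t _ =>
        (Fintype.sum_prod_type (fun y : Fin d × Fin d => X (t, y) ^ 2)).symm)
    exact le_trans h2 (le_trans h3 h4)
  -- norms
  have hnorm : ∀ X : TensorSpace c d, ‖X‖ =
      Real.sqrt (∑ p : Fin c × Fin d × Fin d, X p ^ 2) := by
    intro X
    rw [EuclideanSpace.norm_eq]
    congr 1
    exact Finset.sum_congr rfl fun p _ => by rw [Real.norm_eq_abs, sq_abs]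
  have habs : ∀ X : TensorSpace c d, |CSs c a M K1 Ks KN X| ≤ ‖X‖ := by
    intro X
    rw [hnorm, ← Real.sqrt_sq_eq_abs]
    exact Real.sqrt_le_sqrt (key X)
  -- linearity
  have hconvmid : ∀ (X Y : TensorSpace c d) (i j : Fin a),
      midConv a M Ks (convStride2 (2 ^ M * a)
        (fun h r s => X (h, Fin.cast (by ring) r, Fin.cast (by ring) s) +
          Y (h, Fin.cast (by ring) r, Fin.cast (by ring) s)) K1) i j =
      midConv a M Ks (convStride2 (2 ^ M * a)
        (fun h r s => X (h, Fin.cast (by ring) r, Fin.cast (by ring) s)) K1) i j +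
      midConv a M Ks (convStride2 (2 ^ M * a)
        (fun h r s => Y (h, Fin.cast (by ring) r, Fin.cast (by ring) s)) K1) i j := by
    intro X Y i j
    rw [show (convStride2 (2 ^ M * a)
        (fun h r s => X (h, Fin.cast (by ring) r, Fin.cast (by ring) s) +
          Y (h, Fin.cast (by ring) r, Fin.cast (by ring) s)) K1) =
      fun i j => convStride2 (2 ^ M * a)
          (fun h r s => X (h, Fin.cast (by ring) r, Fin.cast (by ring) s)) K1 i j +
        convStride2 (2 ^ M * a)
          (fun h r s => Y (h, Fin.cast (by ring) r, Fin.cast (by ring) s)) K1 i j from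
      funext fun i => funext fun j => CSsAux.convStride2_add _ _ _ i j]
    exact CSsAux.midConv_add a M Ks _ _ i j
  have hconvmids : ∀ (t : ℝ) (X : TensorSpace c d) (i j : Fin a),
      midConv a M Ks (convStride2 (2 ^ M * a)
        (fun h r s => t * X (h, Fin.cast (by ring) r, Fin.cast (by ring) s)) K1) i j =
      t * midConv a M Ks (convStride2 (2 ^ M * a)
        (fun h r s => X (h, Fin.cast (by ring) r, Fin.cast (by ring) s)) K1) i j := by
    intro t X i j
    rw [show (convStride2 (2 ^ M * a)
        (fun h r s => t * X (h, Fin.cast (by ring) r, Fin.cast (by ring) s)) K1) =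
      fun i j => t * convStride2 (2 ^ M * a)
          (fun h r s => X (h, Fin.cast (by ring) r, Fin.cast (by ring) s)) K1 i j from
      funext fun i => funext fun j => CSsAux.convStride2_smul t _ _ i j]
    exact CSsAux.midConv_smul a M Ks t _ i j
  have hlin : IsLinearMap ℝ (CSs c a M K1 Ks KN) := by
    constructor
    · intro X Y
      show (∑ i : Fin a, ∑ j : Fin a, midConv a M Ks (convStride2 (2 ^ M * a)
          (fun h r s => X (h, Fin.cast (by ring) r, Fin.cast (by ring) s) +
            Y (h, Fin.cast (by ring) r, Fin.cast (by ring) s)) K1) i j * KN 0 i j) = _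
      simp only [fun i j => hconvmid X Y i j, add_mul, Finset.sum_add_distrib]
      rfl
    · intro t X
      show (∑ i : Fin a, ∑ j : Fin a, midConv a M Ks (convStride2 (2 ^ M * a)
          (fun h r s => t * X (h, Fin.cast (by ring) r, Fin.cast (by ring) s)) K1) i j *
            KN 0 i j) = _
      simp only [fun i j => hconvmids t X i j, mul_assoc, ← Finset.mul_sum]
      rfl
  set L := IsLinearMap.mk' _ hlin with hL
  set Θ : TensorSpace c d :=
    (WithLp.toLp 2 (fun p => CSs c a M K1 Ks KN (EuclideanSpace.single p 1)) : EuclideanSpace ℝ _) with hΘ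
  have hΘap : ∀ p, Θ p = CSs c a M K1 Ks KN (EuclideanSpace.single p 1) := fun p => rfl
  have hrep : ∀ X : TensorSpace c d, CSs c a M K1 Ks KN X =
      ∑ p : Fin c × Fin d × Fin d, Θ p * X p := by
    intro X
    conv_lhs =>
      rw [show CSs c a M K1 Ks KN = ⇑L from rfl,
        ← (EuclideanSpace.basisFun (Fin c × Fin d × Fin d) ℝ).sum_repr X, map_sum]
    refine Finset.sum_congr rfl fun p _ => ?_
    rw [_root_.map_smul, EuclideanSpace.basisFun_repr, EuclideanSpace.basisFun_apply,
      smul_eq_mul, mul_comm]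
    rfl
  have hrep' : ∀ X : TensorSpace c d, CSs c a M K1 Ks KN X =
      ∑ h : Fin c, ∑ i : Fin d, ∑ j : Fin d, Θ (h, i, j) * X (h, i, j) := by
    intro X
    rw [hrep X, Fintype.sum_prod_type]
    exact Finset.sum_congr rfl fun h _ => Fintype.sum_prod_type _
  have hΘn : ‖Θ‖ ≤ 1 := by
    have h1 : ‖Θ‖ ^ 2 = CSs c a M K1 Ks KN Θ := by
      rw [hnorm Θ, Real.sq_sqrt (by positivity), hrep Θ]
      exact Finset.sum_congr rfl fun p _ => pow_two (Θ p)
    have h2 : ‖Θ‖ ^ 2 ≤ ‖Θ‖ := h1 ▸ le_trans (le_abs_self _) (habs Θ)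
    nlinarith [norm_nonneg Θ]
  refine ⟨Θ, hΘn, hrep', hlin, ?_⟩
  apply LipschitzWith.of_dist_le_mul
  intro X Y
  rw [Real.dist_eq, dist_eq_norm, NNReal.coe_one, one_mul]
  have hsub : CSs c a M K1 Ks KN X - CSs c a M K1 Ks KN Y = CSs c a M K1 Ks KN (X - Y) :=
    (map_sub L X Y).symm
  rw [hsub]
  exact habs _

end
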